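/- Assume the values h_k over slots k with Π(k) ≠ 0 are pairwise distinct, and let (q, p) be a maximizer of Problem (P). If for some j with 1 ≤ j ≤ |D| the energy-causality constraint holds with equality at i = d_j, i.e. ∑_{k=1}^{d_j} ∑_{n∈N_k^I} p_{k,n} = ζ·∑_{k=1}^{d_j−1} h_k·q_k + B1, then for every l ∈ {j, j+1, …, |D|}: ∑_{k∈D_{l+1}} ∑_{n∈N_k^I} p_{k,n} = ζ·h_{d_l}·q_{d_l}; that is, the energy consumed for information transmission during each interval D_{l+1} exactly equals the energy harvested at the causally dominating slot d_l. -/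

import Mathlib

noncomputable section

/-- The information sub-channel set `N_k^I = {0,…,N} \ {Π(k)}`. -/
def NI (N : ℕ) (Pi : ℕ → ℕ) (k : ℕ) : Finset ℕ := Finset.Icc 0 N \ {Pi k}

/-- Feasibility for Problem (P) with a single WET sub-channel `Π(k)` per slot. -/
def FeasibleP (K N : ℕ) (h : ℕ → ℕ → ℝ) (Q ζ B1 : ℝ) (Pi : ℕ → ℕ)
    (q : ℕ → ℝ) (p : ℕ → ℕ → ℝ) : Prop :=
  (∀ k ∈ Finset.Icc 1 K, 0 ≤ q k) ∧
  (∀ k ∈ Finset.Icc 1 K, Pi k = 0 → q k = 0) ∧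
  (∀ k ∈ Finset.Icc 1 K, ∀ n ∈ NI N Pi k, 0 ≤ p k n) ∧
  (∑ k ∈ Finset.Icc 1 K, q k ≤ (K : ℝ) * Q) ∧
  (∀ i ∈ Finset.Icc 1 K,
    ∑ k ∈ Finset.Icc 1 i, ∑ n ∈ NI N Pi k, p k n ≤
      ζ * ∑ k ∈ Finset.Icc 1 (i - 1), h k (Pi k) * q k + B1)

/-- Achievable rate for Problem (P). -/
def RateP (K N : ℕ) (g : ℕ → ℕ → ℝ) (Γσ : ℝ) (Pi : ℕ → ℕ) (p : ℕ → ℕ → ℝ) : ℝ :=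
  (1 / ((K : ℝ) * N)) * ∑ k ∈ Finset.Icc 1 K, ∑ n ∈ NI N Pi k,
    Real.logb 2 (1 + g k n * p k n / Γσ)

open Classical in
/-- The set `D` of causally dominating slots. -/
def Dset (K : ℕ) (h : ℕ → ℕ → ℝ) (Pi : ℕ → ℕ) : Finset ℕ :=
  (Finset.Icc 1 (K - 1)).filter
    (fun k => Pi k ≠ 0 ∧ ∀ j, 1 ≤ j → j < k → h j (Pi j) < h k (Pi k))

end


-- helper: sum with a single ite addition
lemma sum_ite_add' (s : Finset ℕ) (f : ℕ → ℝ) (a : ℕ) (c : ℝ) :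
    ∑ n ∈ s, (f n + if n = a then c else 0)
      = (∑ n ∈ s, f n) + (if a ∈ s then c else 0) := by
  rw [Finset.sum_add_distrib, Finset.sum_ite_eq' s a (fun _ => c)]

lemma sum_pert (s : Finset ℕ) (f g : ℕ → ℝ) (a b : ℕ) (c1 c2 : ℝ)
    (hg : ∀ μ ∈ s, g μ = f μ + ((if μ = a then c1 else 0) + (if μ = b then c2 else 0))) :
    ∑ μ ∈ s, g μ = (∑ μ ∈ s, f μ)
      + ((if a ∈ s then c1 else 0) + (if b ∈ s then c2 else 0)) := by
  rw [Finset.sum_congr rfl hg, Finset.sum_add_distrib, Finset.sum_add_distrib,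
    Finset.sum_ite_eq' s a (fun _ => c1), Finset.sum_ite_eq' s b (fun _ => c2)]

-- splitting Icc 1 b sums
lemma sum_Icc_split (f : ℕ → ℝ) (a b : ℕ) (hab : a ≤ b) :
    ∑ k ∈ Finset.Icc 1 b, f k
      = (∑ k ∈ Finset.Icc 1 a, f k) + ∑ k ∈ Finset.Icc (a+1) b, f k := by
  have h1 : ∀ m : ℕ, Finset.Icc 1 m = Finset.Ioc 0 m := by
    intro m; rw [← Finset.Icc_add_one_left_eq_Ioc]; rfl
  have h2 : Finset.Icc (a+1) b = Finset.Ioc a b := by rw [← Finset.Icc_add_one_left_eq_Ioc]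
  rw [h1, h1, h2, Finset.sum_Ioc_consecutive _ (Nat.zero_le a) hab]

/-- If some `q'` keeps all constraints valid with slack `ε` at `i = K`,
then `(q,p)` is not optimal. -/
lemma improve_aux (K N : ℕ) (hK : 2 ≤ K) (hN : 2 ≤ N)
    (h g : ℕ → ℕ → ℝ) (hgK1 : 0 < g K 1)
    (Q ζ B1 Γσ : ℝ) (hΓσ : 0 < Γσ)
    (Pi : ℕ → ℕ) (hPiK : Pi K = 0)
    (q : ℕ → ℝ) (p : ℕ → ℕ → ℝ)
    (hfeas : FeasibleP K N h Q ζ B1 Pi q p)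
    (hopt : ∀ q' p', FeasibleP K N h Q ζ B1 Pi q' p' →
      RateP K N g Γσ Pi p' ≤ RateP K N g Γσ Pi p)
    (q' : ℕ → ℝ) (ε : ℝ) (hε : 0 < ε)
    (hq'0 : ∀ k ∈ Finset.Icc 1 K, 0 ≤ q' k)
    (hq'z : ∀ k ∈ Finset.Icc 1 K, Pi k = 0 → q' k = 0)
    (hq's : ∑ k ∈ Finset.Icc 1 K, q' k ≤ (K : ℝ) * Q)
    (hcons : ∀ i ∈ Finset.Icc 1 K,
      (∑ k ∈ Finset.Icc 1 i, ∑ n ∈ NI N Pi k, p k n) + (if i = K then ε else 0)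
        ≤ ζ * ∑ k ∈ Finset.Icc 1 (i-1), h k (Pi k) * q' k + B1) : False := by
  obtain ⟨hq0, hqz, hp0, hqs, hc⟩ := hfeas
  set p' : ℕ → ℕ → ℝ := fun k n => if k = K ∧ n = 1 then p k n + ε else p k n with hp'
  have hKmem : K ∈ Finset.Icc 1 K := by simp [Finset.mem_Icc]; omega
  have h1K : (1:ℕ) ∈ NI N Pi K := by
    simp [NI, Finset.mem_Icc, hPiK]; omega
  have hinner : ∀ k, ∑ n ∈ NI N Pi k, p' k n
      = (∑ n ∈ NI N Pi k, p k n) + (if k = K then ε else 0) := by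
    intro k
    by_cases hk : k = K
    · rw [hk, if_pos rfl]
      have hpt : ∀ n ∈ NI N Pi K, p' K n = p K n + (if n = 1 then ε else 0) := by
        intro n _; by_cases hn : n = 1 <;> simp [hp', hn]
      rw [Finset.sum_congr rfl hpt, sum_ite_add', if_pos h1K]
    · rw [if_neg hk, add_zero]
      refine Finset.sum_congr rfl fun n _ => ?_
      simp [hp', hk]
  have hE : ∀ i, i ≤ K → ∑ k ∈ Finset.Icc 1 i, ∑ n ∈ NI N Pi k, p' k n
      = (∑ k ∈ Finset.Icc 1 i, ∑ n ∈ NI N Pi k, p k n) + (if i = K then ε else 0) := by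
    intro i hi
    rw [Finset.sum_congr rfl (fun k _ => hinner k),
      Finset.sum_add_distrib, Finset.sum_ite_eq' _ K (fun _ => ε)]
    congr 1
    rcases eq_or_ne i K with rfl | hne
    · rw [if_pos hKmem, if_pos rfl]
    · rw [if_neg (by simp [Finset.mem_Icc]; omega), if_neg hne]
  have hfeas' : FeasibleP K N h Q ζ B1 Pi q' p' := by
    refine ⟨hq'0, hq'z, ?_, hq's, ?_⟩
    · intro k hk n hn
      by_cases hkn : k = K ∧ n = 1
      · simp only [hp', if_pos hkn]
        have := hp0 k hk n hn
        linarith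
      · simp only [hp', if_neg hkn]; exact hp0 k hk n hn
    · intro i hi
      rw [hE i (Finset.mem_Icc.mp hi).2]
      exact hcons i hi
  have hpK : 0 ≤ p K 1 := hp0 K hKmem 1 h1K
  have key1 : p' K 1 = p K 1 + ε := by simp [hp']
  have hstrict : Real.logb 2 (1 + g K 1 * p K 1 / Γσ)
      < Real.logb 2 (1 + g K 1 * (p K 1 + ε) / Γσ) := by
    have hx : (0:ℝ) < 1 + g K 1 * p K 1 / Γσ := by positivity
    apply Real.logb_lt_logb one_lt_two hx
    have h1 : 0 < g K 1 * ε / Γσ := by positivity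
    have h2 : g K 1 * (p K 1 + ε) / Γσ = g K 1 * p K 1 / Γσ + g K 1 * ε / Γσ := by ring
    linarith
  have hinnerK : ∑ n ∈ NI N Pi K, Real.logb 2 (1 + g K n * p K n / Γσ)
      < ∑ n ∈ NI N Pi K, Real.logb 2 (1 + g K n * p' K n / Γσ) := by
    apply Finset.sum_lt_sum
    · intro n hn
      by_cases hn1 : n = 1
      · rw [hn1, key1]; exact le_of_lt hstrict
      · have hpe : p' K n = p K n := by simp [hp', hn1]
        rw [hpe]
    · exact ⟨1, h1K, by rw [key1]; exact hstrict⟩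
  have hrate : RateP K N g Γσ Pi p < RateP K N g Γσ Pi p' := by
    unfold RateP
    have hcpos : (0:ℝ) < 1 / ((K : ℝ) * N) := by positivity
    refine mul_lt_mul_of_pos_left ?_ hcpos
    apply Finset.sum_lt_sum
    · intro k hk
      by_cases hkK : k = K
      · rw [hkK]; exact le_of_lt hinnerK
      · refine le_of_eq (Finset.sum_congr rfl fun n _ => ?_)
        simp [hp', hkK]
    · exact ⟨K, hKmem, hinnerK⟩
  exact absurd (hopt q' p' hfeas') (not_le.mpr hrate)

lemma move_pt (q : ℕ → ℝ) (a b : ℕ) (δ : ℝ) (hab : a ≠ b) (w : ℕ → ℝ) (μ : ℕ) :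
    w μ * (if μ = a then q a - δ else if μ = b then q μ + δ else q μ)
      = w μ * q μ + ((if μ = a then -(w a * δ) else 0) + (if μ = b then w b * δ else 0)) := by
  by_cases h1 : μ = a
  · subst h1; rw [if_pos rfl, if_pos rfl, if_neg hab]; ring
  · by_cases h2 : μ = b
    · subst h2; rw [if_neg h1, if_pos rfl, if_neg h1, if_pos rfl]; ring
    · rw [if_neg h1, if_neg h2, if_neg h1, if_neg h2]; ring

lemma move_pt' (q : ℕ → ℝ) (a b : ℕ) (δ : ℝ) (hab : a ≠ b) (μ : ℕ) :
    (if μ = a then q a - δ else if μ = b then q μ + δ else q μ)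
      = q μ + ((if μ = a then -δ else 0) + (if μ = b then δ else 0)) := by
  by_cases h1 : μ = a
  · subst h1; rw [if_pos rfl, if_pos rfl, if_neg hab]; ring
  · by_cases h2 : μ = b
    · subst h2; rw [if_neg h1, if_pos rfl, if_neg h1, if_pos rfl]; ring
    · rw [if_neg h1, if_neg h2, if_neg h1, if_neg h2]; ring

theorem stmt4
    (K N : ℕ) (hK : 2 ≤ K) (hN : 2 ≤ N)
    (h g : ℕ → ℕ → ℝ)
    (hpos : ∀ k ∈ Finset.Icc 1 K, ∀ n ∈ Finset.Icc 1 N, 0 < h k n ∧ 0 < g k n)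
    (hzero : ∀ k, h k 0 = 0 ∧ g k 0 = 0)
    (Q ζ B1 Γσ : ℝ) (hQ : 0 < Q) (hζ : 0 < ζ) (hB1 : 0 ≤ B1) (hΓσ : 0 < Γσ)
    (Pi : ℕ → ℕ) (hPiK : Pi K = 0) (hPiR : ∀ k ∈ Finset.Icc 1 K, Pi k ≤ N)
    (M : ℕ) (hM : M = (Dset K h Pi).card)
    (d : ℕ → ℕ) (hd0 : d 0 = 0) (hdK : d (M + 1) = K)
    (hdmono : ∀ i j, i < j → j ≤ M + 1 → d i < d j)
    (hdmem : ∀ i, 1 ≤ i → i ≤ M → d i ∈ Dset K h Pi)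
    (hdsurj : ∀ k ∈ Dset K h Pi, ∃ i, 1 ≤ i ∧ i ≤ M ∧ d i = k)
    (hdist : ∀ k ∈ Finset.Icc 1 K, ∀ k' ∈ Finset.Icc 1 K,
      Pi k ≠ 0 → Pi k' ≠ 0 → k ≠ k' → h k (Pi k) ≠ h k' (Pi k'))
    (q : ℕ → ℝ) (p : ℕ → ℕ → ℝ)
    (hfeas : FeasibleP K N h Q ζ B1 Pi q p)
    (hopt : ∀ q' p', FeasibleP K N h Q ζ B1 Pi q' p' →
      RateP K N g Γσ Pi p' ≤ RateP K N g Γσ Pi p)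
    (j : ℕ) (hj1 : 1 ≤ j) (hjM : j ≤ M)
    (heq : ∑ k ∈ Finset.Icc 1 (d j), ∑ n ∈ NI N Pi k, p k n =
      ζ * ∑ k ∈ Finset.Icc 1 (d j - 1), h k (Pi k) * q k + B1) :
    ∀ l, j ≤ l → l ≤ M →
      ∑ k ∈ Finset.Icc (d l + 1) (d (l + 1)), ∑ n ∈ NI N Pi k, p k n =
        ζ * h (d l) (Pi (d l)) * q (d l) := by
  classical
  obtain ⟨hq0, hqz, hp0, hqs, hc⟩ := id hfeas
  have hgK1 : 0 < g K 1 :=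
    (hpos K (by simp [Finset.mem_Icc]; omega) 1 (by simp [Finset.mem_Icc]; omega)).2
  have hDmem : ∀ k ∈ Dset K h Pi, (1 ≤ k ∧ k ≤ K - 1) ∧ Pi k ≠ 0 ∧
      ∀ j', 1 ≤ j' → j' < k → h j' (Pi j') < h k (Pi k) := by
    intro k hk
    simpa only [Dset, Finset.mem_filter, Finset.mem_Icc] using hk
  have hdrange : ∀ i, 1 ≤ i → i ≤ M → 1 ≤ d i ∧ d i ≤ K - 1 := by
    intro i h1 h2
    exact (hDmem _ (hdmem i h1 h2)).1
  have hdmono' : ∀ i i', i ≤ i' → i' ≤ M + 1 → d i ≤ d i' := by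
    intro i i' hii hi'
    rcases eq_or_lt_of_le hii with rfl | hlt
    · exact le_rfl
    · exact le_of_lt (hdmono i i' hlt hi')
  have hinn0 : ∀ k ∈ Finset.Icc 1 K, 0 ≤ ∑ n ∈ NI N Pi k, p k n :=
    fun k hk => Finset.sum_nonneg (fun n hn => hp0 k hk n hn)
  have hEmono : ∀ a b, a ≤ b → b ≤ K →
      (∑ k ∈ Finset.Icc 1 a, ∑ n ∈ NI N Pi k, p k n)
        ≤ ∑ k ∈ Finset.Icc 1 b, ∑ n ∈ NI N Pi k, p k n := by
    intro a b hab hbK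
    apply Finset.sum_le_sum_of_subset_of_nonneg (Finset.Icc_subset_Icc_right hab)
    intro k hk _
    exact hinn0 k (Finset.Icc_subset_Icc_right hbK hk)
  have hhp : ∀ k ∈ Finset.Icc 1 K, Pi k ≠ 0 → 0 < h k (Pi k) := by
    intro k hk hP
    exact (hpos k hk (Pi k) (Finset.mem_Icc.mpr ⟨Nat.one_le_iff_ne_zero.mpr hP, hPiR k hk⟩)).1
  have hhn : ∀ k ∈ Finset.Icc 1 K, 0 ≤ h k (Pi k) := by
    intro k hk
    by_cases hP : Pi k = 0
    · rw [hP, (hzero k).1]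
    · exact le_of_lt (hhp k hk hP)
  have hHsplit : ∀ a b, 1 ≤ a → a ≤ b →
      ζ * ∑ k ∈ Finset.Icc 1 (b-1), h k (Pi k) * q k + B1
        = (ζ * ∑ k ∈ Finset.Icc 1 (a-1), h k (Pi k) * q k + B1)
          + ζ * ∑ k ∈ Finset.Icc a (b-1), h k (Pi k) * q k := by
    intro a b ha hab
    have hsp := sum_Icc_split (fun k => h k (Pi k) * q k) (a-1) (b-1) (by omega)
    have ha1 : a - 1 + 1 = a := by omega
    rw [ha1] at hsp
    rw [hsp]; ring
  -- Lemma A : no WET power off the dominating set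
  have lemA : ∀ k, 1 ≤ k → k ≤ K - 1 → k ∉ Dset K h Pi → h k (Pi k) * q k = 0 := by
    intro k hk1 hk2 hkD
    have hkK : k ∈ Finset.Icc 1 K := by simp [Finset.mem_Icc]; omega
    by_cases hPik : Pi k = 0
    · rw [hPik, (hzero k).1, zero_mul]
    · rcases eq_or_lt_of_le (hq0 k hkK) with hq | hq
      · rw [← hq, mul_zero]
      · exfalso
        have hhk : 0 < h k (Pi k) := hhp k hkK hPik
        have hex : ∃ j', 1 ≤ j' ∧ j' < k ∧ h k (Pi k) < h j' (Pi j') := by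
          by_contra hno
          push_neg at hno
          apply hkD
          simp only [Dset, Finset.mem_filter, Finset.mem_Icc]
          refine ⟨⟨hk1, hk2⟩, hPik, fun j' h1 h2 => ?_⟩
          have hle := hno j' h1 h2
          rcases eq_or_lt_of_le hle with heq' | hlt
          · by_cases hPj : Pi j' = 0
            · rw [hPj, (hzero j').1]; exact hhk
            · exact absurd heq'
                (hdist j' (by simp [Finset.mem_Icc]; omega) k hkK hPj hPik (by omega))
          · exact hlt
        obtain ⟨b, hb1, hbk, hlt⟩ := hex
        have hbK : b ∈ Finset.Icc 1 K := by simp [Finset.mem_Icc]; omega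
        have hPb : Pi b ≠ 0 := by
          intro h0
          rw [h0, (hzero b).1] at hlt
          linarith
        have hab : k ≠ b := by omega
        set δ := q k with hδdef
        set ε := ζ * ((h b (Pi b) - h k (Pi k)) * δ) with hεdef
        have hεpos : 0 < ε := mul_pos hζ (mul_pos (by linarith) hq)
        set q' : ℕ → ℝ := fun m => if m = k then q k - δ else if m = b then q m + δ else q m
          with hq'def
        refine improve_aux K N hK hN h g hgK1 Q ζ B1 Γσ hΓσ Pi hPiK q p hfeas hopt q' ε hεpos
          ?_ ?_ ?_ ?_
        · intro m hm
          simp only [hq'def]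
          split_ifs with h1 h2
          · linarith
          · have := hq0 m hm; linarith
          · exact hq0 m hm
        · intro m hm hPm
          simp only [hq'def]
          split_ifs with h1 h2
          · rw [h1] at hPm; exact absurd hPm hPik
          · rw [h2] at hPm; exact absurd hPm hPb
          · exact hqz m hm hPm
        · rw [sum_pert (Finset.Icc 1 K) q q' k b (-δ) δ
            (fun μ _ => by simp only [hq'def]; exact move_pt' q k b δ hab μ),
            if_pos hkK, if_pos hbK]
          linarith
        · intro i hi
          have hi' := Finset.mem_Icc.mp hi
          rw [sum_pert (Finset.Icc 1 (i-1)) (fun μ => h μ (Pi μ) * q μ)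
            (fun μ => h μ (Pi μ) * q' μ) k b (-(h k (Pi k) * δ)) (h b (Pi b) * δ)
            (fun μ _ => by simp only [hq'def]; exact move_pt q k b δ hab (fun μ => h μ (Pi μ)) μ)]
          set S := ∑ μ ∈ Finset.Icc 1 (i-1), h μ (Pi μ) * q μ with hS
          by_cases h1 : i ≤ b
          · rw [if_neg (show ¬ k ∈ Finset.Icc 1 (i-1) by simp [Finset.mem_Icc]; omega),
              if_neg (show ¬ b ∈ Finset.Icc 1 (i-1) by simp [Finset.mem_Icc]; omega),
              if_neg (show ¬ i = K by omega)]
            have hring : ζ * (S + (0 + 0)) + B1 = ζ * S + B1 := by ring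
            have := hc i hi
            rw [hS] at hring ⊢
            linarith
          · by_cases h2 : i ≤ k
            · rw [if_neg (show ¬ k ∈ Finset.Icc 1 (i-1) by simp [Finset.mem_Icc]; omega),
                if_pos (show b ∈ Finset.Icc 1 (i-1) by simp [Finset.mem_Icc]; omega),
                if_neg (show ¬ i = K by omega)]
              have hring : ζ * (S + (0 + h b (Pi b) * δ)) + B1
                  = (ζ * S + B1) + ζ * (h b (Pi b) * δ) := by ring
              have hnn : 0 ≤ ζ * (h b (Pi b) * δ) :=
                mul_nonneg (le_of_lt hζ) (mul_nonneg (hhn b hbK) (le_of_lt hq))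
              have := hc i hi
              rw [hS] at hring ⊢
              linarith
            · rw [if_pos (show k ∈ Finset.Icc 1 (i-1) by simp [Finset.mem_Icc]; omega),
                if_pos (show b ∈ Finset.Icc 1 (i-1) by simp [Finset.mem_Icc]; omega)]
              have hring : ζ * (S + (-(h k (Pi k) * δ) + h b (Pi b) * δ)) + B1
                  = (ζ * S + B1) + ε := by rw [hεdef]; ring
              have hite : (if i = K then ε else 0) ≤ ε := by
                split_ifs
                · exact le_rfl
                · exact le_of_lt hεpos
              have := hc i hi
              rw [hS] at hring ⊢
              linarith
  -- tightness at K
  have hKIcc : K ∈ Finset.Icc 1 K := by simp [Finset.mem_Icc]; omega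
  have tightK : ∑ k ∈ Finset.Icc 1 K, ∑ n ∈ NI N Pi k, p k n
      = ζ * ∑ k ∈ Finset.Icc 1 (K-1), h k (Pi k) * q k + B1 := by
    by_contra hne
    have hlt := lt_of_le_of_ne (hc K hKIcc) hne
    refine improve_aux K N hK hN h g hgK1 Q ζ B1 Γσ hΓσ Pi hPiK q p hfeas hopt q
      ((ζ * ∑ k ∈ Finset.Icc 1 (K-1), h k (Pi k) * q k + B1)
        - ∑ k ∈ Finset.Icc 1 K, ∑ n ∈ NI N Pi k, p k n)
      (by linarith) hq0 hqz hqs ?_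
    intro i hi
    by_cases hiK : i = K
    · rw [hiK, if_pos rfl]
      linarith
    · rw [if_neg hiK, add_zero]
      exact hc i hi
  -- tightness at every d l, l ∈ [j, M+1]
  have tight : ∀ l, j ≤ l → l ≤ M + 1 →
      ∑ k ∈ Finset.Icc 1 (d l), ∑ n ∈ NI N Pi k, p k n
        = ζ * ∑ k ∈ Finset.Icc 1 (d l - 1), h k (Pi k) * q k + B1 := by
    intro l hjl hlM1
    rcases eq_or_ne l j with rfl | hlj
    · exact heq
    rcases eq_or_ne l (M+1) with rfl | hlM
    · rw [hdK]; exact tightK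
    have hlM' : l ≤ M := by omega
    have hjl' : j < l := by omega
    have hl1 : 1 ≤ l := by omega
    have hdl := hdrange l hl1 hlM'
    have hdj := hdrange j hj1 hjM
    have hdjl : d j < d l := hdmono j l hjl' (by omega)
    have hdlK : d l ∈ Finset.Icc 1 K := by simp [Finset.mem_Icc]; omega
    by_contra hne
    have hslack := lt_of_le_of_ne (hc (d l) hdlK) hne
    set T := (Finset.Icc (d j) (d l - 1)).filter (fun μ => h μ (Pi μ) * q μ ≠ 0) with hT
    have hTne : T.Nonempty := by
      by_contra hTe
      rw [Finset.not_nonempty_iff_eq_empty] at hTe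
      have hzsum : ∑ μ ∈ Finset.Icc (d j) (d l - 1), h μ (Pi μ) * q μ = 0 := by
        apply Finset.sum_eq_zero
        intro μ hμ
        by_contra hμ0
        have : μ ∈ T := Finset.mem_filter.mpr ⟨hμ, hμ0⟩
        rw [hTe] at this
        exact absurd this (Finset.notMem_empty μ)
      have hsp := hHsplit (d j) (d l) hdj.1 (le_of_lt hdjl)
      rw [hzsum, mul_zero, add_zero] at hsp
      have hEm := hEmono (d j) (d l) (le_of_lt hdjl) (by omega)
      linarith
    set a := T.max' hTne with ha
    have haT : a ∈ T := T.max'_mem hTne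
    have hamax : ∀ μ ∈ T, μ ≤ a := fun μ hμ => T.le_max' μ hμ
    obtain ⟨haIcc, haq⟩ := Finset.mem_filter.mp haT
    have haR := Finset.mem_Icc.mp haIcc
    have ha1 : 1 ≤ a := le_trans hdj.1 haR.1
    have haK : a ∈ Finset.Icc 1 K := by simp [Finset.mem_Icc]; omega
    have hqa : 0 < q a := by
      rcases eq_or_lt_of_le (hq0 a haK) with hq | hq
      · exfalso; apply haq; rw [← hq, mul_zero]
      · exact hq
    have hPa : Pi a ≠ 0 := by
      intro h0; apply haq; rw [h0, (hzero a).1, zero_mul]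
    have hha : 0 < h a (Pi a) := hhp a haK hPa
    have haltb : a < d l := by omega
    have hDl := hDmem _ (hdmem l hl1 hlM')
    have hhab : h a (Pi a) < h (d l) (Pi (d l)) := hDl.2.2 a ha1 haltb
    have hPb : Pi (d l) ≠ 0 := hDl.2.1
    set slack := (ζ * ∑ k ∈ Finset.Icc 1 (d l - 1), h k (Pi k) * q k + B1)
      - ∑ k ∈ Finset.Icc 1 (d l), ∑ n ∈ NI N Pi k, p k n with hsl
    have hslpos : 0 < slack := by rw [hsl]; linarith
    set δ := min (q a) (slack / (ζ * h a (Pi a))) with hδ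
    have hδpos : 0 < δ := lt_min hqa (div_pos hslpos (mul_pos hζ hha))
    have hδa : δ ≤ q a := min_le_left _ _
    have hδs : ζ * (h a (Pi a) * δ) ≤ slack := by
      have hmr := min_le_right (q a) (slack / (ζ * h a (Pi a)))
      have hzh : 0 < ζ * h a (Pi a) := mul_pos hζ hha
      calc ζ * (h a (Pi a) * δ) = (ζ * h a (Pi a)) * δ := by ring
        _ ≤ (ζ * h a (Pi a)) * (slack / (ζ * h a (Pi a))) :=
            mul_le_mul_of_nonneg_left hmr (le_of_lt hzh)
        _ = slack := by field_simp
    set ε := ζ * ((h (d l) (Pi (d l)) - h a (Pi a)) * δ) with hε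
    have hεpos : 0 < ε := mul_pos hζ (mul_pos (by linarith) hδpos)
    have hab : a ≠ d l := by omega
    set q' : ℕ → ℝ := fun m => if m = a then q a - δ else if m = d l then q m + δ else q m
      with hq'def
    refine improve_aux K N hK hN h g hgK1 Q ζ B1 Γσ hΓσ Pi hPiK q p hfeas hopt q' ε hεpos
      ?_ ?_ ?_ ?_
    · intro m hm
      simp only [hq'def]
      split_ifs with h1 h2
      · linarith
      · have := hq0 m hm; linarith
      · exact hq0 m hm
    · intro m hm hPm
      simp only [hq'def]
      split_ifs with h1 h2
      · rw [h1] at hPm; exact absurd hPm hPa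
      · rw [h2] at hPm; exact absurd hPm hPb
      · exact hqz m hm hPm
    · rw [sum_pert (Finset.Icc 1 K) q q' a (d l) (-δ) δ
        (fun μ _ => by simp only [hq'def]; exact move_pt' q a (d l) δ hab μ),
        if_pos haK, if_pos hdlK]
      linarith
    · intro i hi
      have hi' := Finset.mem_Icc.mp hi
      rw [sum_pert (Finset.Icc 1 (i-1)) (fun μ => h μ (Pi μ) * q μ)
        (fun μ => h μ (Pi μ) * q' μ) a (d l) (-(h a (Pi a) * δ)) (h (d l) (Pi (d l)) * δ)
        (fun μ _ => by simp only [hq'def]; exact move_pt q a (d l) δ hab (fun μ => h μ (Pi μ)) μ)]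
      set S := ∑ μ ∈ Finset.Icc 1 (i-1), h μ (Pi μ) * q μ with hS
      by_cases h1 : i ≤ a
      · rw [if_neg (show ¬ a ∈ Finset.Icc 1 (i-1) by simp [Finset.mem_Icc]; omega),
          if_neg (show ¬ d l ∈ Finset.Icc 1 (i-1) by simp [Finset.mem_Icc]; omega),
          if_neg (show ¬ i = K by omega)]
        have hring : ζ * (S + (0 + 0)) + B1 = ζ * S + B1 := by ring
        have := hc i hi
        rw [hS] at hring ⊢
        linarith
      · by_cases h2 : i ≤ d l
        · rw [if_pos (show a ∈ Finset.Icc 1 (i-1) by simp [Finset.mem_Icc]; omega),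
            if_neg (show ¬ d l ∈ Finset.Icc 1 (i-1) by simp [Finset.mem_Icc]; omega),
            if_neg (show ¬ i = K by omega)]
          -- H_i = H_{d l} because all harvested terms in (a, d l) vanish
          have hsp2 := hHsplit i (d l) (by omega) h2
          have htail : ∑ μ ∈ Finset.Icc i (d l - 1), h μ (Pi μ) * q μ = 0 := by
            apply Finset.sum_eq_zero
            intro μ hμ
            have hμ' := Finset.mem_Icc.mp hμ
            by_contra hμ0
            have hμT : μ ∈ T :=
              Finset.mem_filter.mpr ⟨Finset.mem_Icc.mpr ⟨by omega, by omega⟩, hμ0⟩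
            have := hamax μ hμT
            omega
          rw [htail, mul_zero, add_zero] at hsp2
          have hEm := hEmono i (d l) h2 (by omega)
          have hring : ζ * (S + (-(h a (Pi a) * δ) + 0)) + B1
              = (ζ * S + B1) - ζ * (h a (Pi a) * δ) := by ring
          rw [hS] at hring ⊢
          rw [hsl] at hδs hslpos
          linarith
        · rw [if_pos (show a ∈ Finset.Icc 1 (i-1) by simp [Finset.mem_Icc]; omega),
            if_pos (show d l ∈ Finset.Icc 1 (i-1) by simp [Finset.mem_Icc]; omega)]
          have hring : ζ * (S + (-(h a (Pi a) * δ) + h (d l) (Pi (d l)) * δ)) + B1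
              = (ζ * S + B1) + ε := by rw [hε]; ring
          have hite : (if i = K then ε else 0) ≤ ε := by
            split_ifs
            · exact le_rfl
            · exact le_of_lt hεpos
          have := hc i hi
          rw [hS] at hring ⊢
          linarith
  -- conclusion
  intro l hl1 hl2
  have t1 := tight l hl1 (by omega)
  have t2 := tight (l+1) (by omega) (by omega)
  have hdl1 : 1 ≤ d l := (hdrange l (by omega) hl2).1
  have hdlK' : d l ≤ K - 1 := (hdrange l (by omega) hl2).2
  have hdlt : d l < d (l+1) := hdmono l (l+1) (by omega) (by omega)
  have hdl1K : d (l+1) ≤ K := by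
    rw [← hdK]; exact hdmono' (l+1) (M+1) (by omega) le_rfl
  have hEs := sum_Icc_split (fun k => ∑ n ∈ NI N Pi k, p k n) (d l) (d (l+1)) (le_of_lt hdlt)
  have hHs := hHsplit (d l) (d (l+1)) hdl1 (le_of_lt hdlt)
  have hsingle : ∑ k ∈ Finset.Icc (d l) (d (l+1) - 1), h k (Pi k) * q k
      = h (d l) (Pi (d l)) * q (d l) := by
    apply Finset.sum_eq_single_of_mem (d l) (Finset.mem_Icc.mpr ⟨le_rfl, by omega⟩)
    intro k hk hne
    have hk' := Finset.mem_Icc.mp hk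
    apply lemA k (by omega) (by omega)
    intro hkD
    obtain ⟨i, hi1, hiM, hdi⟩ := hdsurj k hkD
    have hgt : l < i := by
      by_contra hle
      push_neg at hle
      have := hdmono' i l hle (by omega)
      omega
    have hlt2 : i < l + 1 := by
      by_contra hge
      push_neg at hge
      have := hdmono' (l+1) i hge (by omega)
      omega
    omega
  rw [hsingle] at hHs
  have hfin : ζ * (h (d l) (Pi (d l)) * q (d l)) = ζ * h (d l) (Pi (d l)) * q (d l) := by ring
  linarith
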